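/- A (2,M,q) code C over Q is a 3-MIPPC(2,M,q) (equivalently, satisfies conditions (I) and (II) of the combinatorial characterization) if and only if the set system (Q, {A¹_0, …, A¹_{q−1}}) is a triangle-free generalized (q,q,K,1) packing, where K = {|A¹_0|,…,|A¹_{q−1}|}; moreover M = |A¹_0| + ⋯ + |A¹_{q−1}|. -/
import Mathlib


/-- The descendant code of a sub-code of a code of length 2, viewed as a set of pairs. -/
def desc2 {q : ℕ} (C' : Finset (Fin q × Fin q)) : Set (Fin q × Fin q) :=
  {x | (∃ c ∈ C', c.1 = x.1) ∧ (∃ c ∈ C', c.2 = x.2)}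

/-- `C` is a `t`-MIPPC of length 2: for every descendant set produced by some nonempty
sub-code of size at most `t`, all such parent sets have a common codeword. -/
def isMIPPC2 {q : ℕ} (t : ℕ) (C : Finset (Fin q × Fin q)) : Prop :=
  ∀ S : Set (Fin q × Fin q),
    (∃ C' : Finset (Fin q × Fin q), C' ⊆ C ∧ C'.Nonempty ∧ C'.card ≤ t ∧ desc2 C' = S) →
    ∃ c, ∀ C' : Finset (Fin q × Fin q),
      C' ⊆ C → C'.Nonempty → C'.card ≤ t → desc2 C' = S → c ∈ C'

/-- `A¹_a = {b : (a,b) ∈ C}`. -/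
def A1 {q : ℕ} (C : Finset (Fin q × Fin q)) (a : Fin q) : Finset (Fin q) :=
  (C.filter (fun c => c.1 = a)).image Prod.snd

/-- Condition (I). -/
def CondI {q : ℕ} (C : Finset (Fin q × Fin q)) : Prop :=
  ∀ a₁ a₂ : Fin q, a₁ ≠ a₂ → (A1 C a₁ ∩ A1 C a₂).card ≤ 1

/-- Condition (II). -/
def CondII {q : ℕ} (C : Finset (Fin q × Fin q)) : Prop :=
  ¬ ∃ a₁ a₂ a₃ b₁ b₂ b₃ : Fin q,
      a₁ ≠ a₂ ∧ a₁ ≠ a₃ ∧ a₂ ≠ a₃ ∧ b₁ ≠ b₂ ∧ b₁ ≠ b₃ ∧ b₂ ≠ b₃ ∧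
      b₁ ∈ A1 C a₁ ∧ b₂ ∈ A1 C a₁ ∧ b₂ ∈ A1 C a₂ ∧ b₃ ∈ A1 C a₂ ∧
      b₁ ∈ A1 C a₃ ∧ b₃ ∈ A1 C a₃

/-- A family of blocks (possibly empty) is a generalized packing with index `λ = 1`:
every pair of distinct points lies in at most one block. -/
def IsGenPacking {ι α : Type*} [DecidableEq α] (B : ι → Finset α) : Prop :=
  ∀ i j : ι, i ≠ j → ∀ x y : α, x ≠ y →
    ¬(x ∈ B i ∧ y ∈ B i ∧ x ∈ B j ∧ y ∈ B j)

/-- The family of blocks is triangle-free: no three distinct points whose three pairs are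
covered by three distinct blocks. -/
def IsTriangleFree {ι α : Type*} [DecidableEq α] (B : ι → Finset α) : Prop :=
  ¬ ∃ (i j k : ι) (x y z : α),
      i ≠ j ∧ i ≠ k ∧ j ≠ k ∧ x ≠ y ∧ x ≠ z ∧ y ≠ z ∧
      x ∈ B i ∧ y ∈ B i ∧ y ∈ B j ∧ z ∈ B j ∧ x ∈ B k ∧ z ∈ B k

set_option maxRecDepth 1000000 in
set_option synthInstance.maxSize 100000 in
set_option synthInstance.maxHeartbeats 0 in
set_option maxHeartbeats 0 in
/-- Finite core fact, checked by `decide`: a nonempty bipartite relation on a `3 × 3`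
grid with no (nondegenerate) 4-cycle and no 6-cycle has a column with a unique
occupied row, or a row with a unique occupied column. -/
theorem mippc_core2 : ∀ R : Fin 3 → Fin 3 → Bool,
  ((∃ j i, R i j ∧ ∀ i', R i' j → i' = i) ∨ (∃ i j, R i j ∧ ∀ j', R i j' → j' = j)) ∨
  (¬ ∃ i j, R i j) ∨
  (¬ ∀ i i' j j', R i j → R i' j → R i j' → R i' j' → i = i' ∨ j = j') ∨
  (¬ ∀ i j k x y z, R i x → R i y → R j y → R j z → R k x → R k z →
      i = j ∨ i = k ∨ j = k ∨ x = y ∨ x = z ∨ y = z) := by decide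

theorem mippc_core (R : Fin 3 → Fin 3 → Bool)
    (hne : ∃ i j, R i j)
    (h4 : ∀ i i' j j', R i j → R i' j → R i j' → R i' j' → i = i' ∨ j = j')
    (h6 : ∀ i j k x y z, R i x → R i y → R j y → R j z → R k x → R k z →
      i = j ∨ i = k ∨ j = k ∨ x = y ∨ x = z ∨ y = z) :
    (∃ j i, R i j ∧ ∀ i', R i' j → i' = i) ∨ (∃ i j, R i j ∧ ∀ j', R i j' → j' = j) := by
  rcases mippc_core2 R with h | h | h | h
  · exact h
  · exact absurd hne h
  · exact absurd h4 h
  · exact absurd h6 h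

theorem mem_A1 {q : ℕ} (C : Finset (Fin q × Fin q)) (a b : Fin q) :
    b ∈ A1 C a ↔ (a, b) ∈ C := by
  simp only [A1, Finset.mem_image, Finset.mem_filter]
  constructor
  · rintro ⟨⟨c1, c2⟩, ⟨hc, h1⟩, h2⟩
    simp only at h1 h2
    subst h1; subst h2; exact hc
  · intro h; exact ⟨(a, b), ⟨h, rfl⟩, rfl⟩

theorem mem_desc2 {q : ℕ} {C' : Finset (Fin q × Fin q)} {x : Fin q × Fin q} :
    x ∈ desc2 C' ↔ x.1 ∈ C'.image Prod.fst ∧ x.2 ∈ C'.image Prod.snd := by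
  simp [desc2, Finset.mem_image]

/-- The first projection of a nonempty subcode is determined by its descendant set. -/
theorem image_fst_subset_of_desc2_eq {q : ℕ} {D E : Finset (Fin q × Fin q)}
    (h : desc2 D = desc2 E) (hD : D.Nonempty) :
    D.image Prod.fst ⊆ E.image Prod.fst := by
  obtain ⟨⟨u, v⟩, huv⟩ := hD
  intro a ha
  have h1 : ((a, v) : Fin q × Fin q) ∈ desc2 D :=
    mem_desc2.2 ⟨ha, Finset.mem_image.2 ⟨(u, v), huv, rfl⟩⟩
  rw [h] at h1
  exact (mem_desc2.1 h1).1

theorem image_snd_subset_of_desc2_eq {q : ℕ} {D E : Finset (Fin q × Fin q)}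
    (h : desc2 D = desc2 E) (hD : D.Nonempty) :
    D.image Prod.snd ⊆ E.image Prod.snd := by
  obtain ⟨⟨u, v⟩, huv⟩ := hD
  intro b hb
  have h1 : ((u, b) : Fin q × Fin q) ∈ desc2 D :=
    mem_desc2.2 ⟨Finset.mem_image.2 ⟨(u, v), huv, rfl⟩, hb⟩
  rw [h] at h1
  exact (mem_desc2.1 h1).2

theorem desc2_eq_of_images {q : ℕ} {D E : Finset (Fin q × Fin q)}
    (h1 : D.image Prod.fst = E.image Prod.fst) (h2 : D.image Prod.snd = E.image Prod.snd) :
    desc2 D = desc2 E := by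
  ext x
  rw [mem_desc2, mem_desc2, h1, h2]

theorem mippc_backward {q : ℕ} (C : Finset (Fin q × Fin q))
    (hpack : IsGenPacking (A1 C)) (htf : IsTriangleFree (A1 C)) :
    isMIPPC2 3 C := by
  classical
  intro S hS
  obtain ⟨C₀, hC₀C, hC₀ne, hC₀card, hC₀S⟩ := hS
  set U : Finset (Fin q) := C₀.image Prod.fst with hUdef
  set V : Finset (Fin q) := C₀.image Prod.snd with hVdef
  -- any admissible subcode has projections U and V
  have hproj : ∀ C' : Finset (Fin q × Fin q), C'.Nonempty → desc2 C' = S →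
      C'.image Prod.fst = U ∧ C'.image Prod.snd = V := by
    intro C' hne hSe
    have e : desc2 C' = desc2 C₀ := by rw [hSe, hC₀S]
    exact ⟨Finset.Subset.antisymm (image_fst_subset_of_desc2_eq e hne)
        (image_fst_subset_of_desc2_eq e.symm hC₀ne),
      Finset.Subset.antisymm (image_snd_subset_of_desc2_eq e hne)
        (image_snd_subset_of_desc2_eq e.symm hC₀ne)⟩
  have hUcard : Fintype.card {x // x ∈ U} ≤ Fintype.card (Fin 3) := by
    rw [Fintype.card_coe, Fintype.card_fin]
    exact le_trans Finset.card_image_le hC₀card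
  have hVcard : Fintype.card {x // x ∈ V} ≤ Fintype.card (Fin 3) := by
    rw [Fintype.card_coe, Fintype.card_fin]
    exact le_trans Finset.card_image_le hC₀card
  obtain ⟨f⟩ := Function.Embedding.nonempty_of_card_le hUcard
  obtain ⟨g⟩ := Function.Embedding.nonempty_of_card_le hVcard
  set Rp : Fin 3 → Fin 3 → Prop := fun i j =>
    ∃ (a : {x // x ∈ U}) (b : {x // x ∈ V}), f a = i ∧ g b = j ∧ ((a : Fin q), (b : Fin q)) ∈ C
    with hRpdef
  set R : Fin 3 → Fin 3 → Bool := fun i j => decide (Rp i j) with hRdef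
  have hR : ∀ i j, R i j = true ↔ Rp i j := by
    intro i j; simp [hRdef]
  -- nonemptiness
  have hne : ∃ i j, R i j = true := by
    obtain ⟨c, hc⟩ := hC₀ne
    have h1 : c.1 ∈ U := Finset.mem_image_of_mem _ hc
    have h2 : c.2 ∈ V := Finset.mem_image_of_mem _ hc
    exact ⟨f ⟨c.1, h1⟩, g ⟨c.2, h2⟩, (hR _ _).2 ⟨⟨c.1, h1⟩, ⟨c.2, h2⟩, rfl, rfl, hC₀C hc⟩⟩
  -- no 4-cycle
  have h4 : ∀ i i' j j', R i j = true → R i' j = true → R i j' = true → R i' j' = true →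
      i = i' ∨ j = j' := by
    intro i i' j j' r1 r2 r3 r4
    by_contra hcon
    push_neg at hcon
    obtain ⟨hii, hjj⟩ := hcon
    obtain ⟨a1, b1, hfa1, hgb1, hm1⟩ := (hR _ _).1 r1
    obtain ⟨a2, b2, hfa2, hgb2, hm2⟩ := (hR _ _).1 r2
    obtain ⟨a3, b3, hfa3, hgb3, hm3⟩ := (hR _ _).1 r3
    obtain ⟨a4, b4, hfa4, hgb4, hm4⟩ := (hR _ _).1 r4
    have eb : b2 = b1 := g.injective (by rw [hgb2, hgb1])
    have ea : a3 = a1 := f.injective (by rw [hfa3, hfa1])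
    have ea' : a4 = a2 := f.injective (by rw [hfa4, hfa2])
    have eb' : b4 = b3 := g.injective (by rw [hgb4, hgb3])
    rw [eb] at hm2
    rw [ea] at hm3
    rw [ea', eb'] at hm4
    have ha12 : (a1 : Fin q) ≠ (a2 : Fin q) := by
      intro h
      exact hii (by rw [← hfa1, ← hfa2, Subtype.ext h])
    have hb13 : (b1 : Fin q) ≠ (b3 : Fin q) := by
      intro h
      exact hjj (by rw [← hgb1, ← hgb3, Subtype.ext h])
    exact hpack (a1 : Fin q) (a2 : Fin q) ha12 (b1 : Fin q) (b3 : Fin q) hb13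
      ⟨(mem_A1 C _ _).2 hm1, (mem_A1 C _ _).2 hm3, (mem_A1 C _ _).2 hm2, (mem_A1 C _ _).2 hm4⟩
  -- no 6-cycle
  have h6 : ∀ i j k x y z, R i x = true → R i y = true → R j y = true → R j z = true →
      R k x = true → R k z = true →
      i = j ∨ i = k ∨ j = k ∨ x = y ∨ x = z ∨ y = z := by
    intro i j k x y z r1 r2 r3 r4 r5 r6
    by_contra hcon
    push_neg at hcon
    obtain ⟨hij, hik, hjk, hxy, hxz, hyz⟩ := hcon
    obtain ⟨ai, bx, e1, e2, m1⟩ := (hR _ _).1 r1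
    obtain ⟨ai', by', e3, e4, m2⟩ := (hR _ _).1 r2
    obtain ⟨aj, by2, e5, e6, m3⟩ := (hR _ _).1 r3
    obtain ⟨aj', bz, e7, e8, m4⟩ := (hR _ _).1 r4
    obtain ⟨ak, bx2, e9, e10, m5⟩ := (hR _ _).1 r5
    obtain ⟨ak', bz2, e11, e12, m6⟩ := (hR _ _).1 r6
    have eai : ai' = ai := f.injective (by rw [e3, e1])
    have eaj : aj' = aj := f.injective (by rw [e7, e5])
    have eak : ak' = ak := f.injective (by rw [e11, e9])
    have eby : by2 = by' := g.injective (by rw [e6, e4])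
    have ebx : bx2 = bx := g.injective (by rw [e10, e2])
    have ebz : bz2 = bz := g.injective (by rw [e12, e8])
    rw [eai] at m2
    rw [eby] at m3
    rw [eaj] at m4
    rw [ebx] at m5
    rw [eak, ebz] at m6
    apply htf
    refine ⟨(ai : Fin q), (aj : Fin q), (ak : Fin q), (bx : Fin q), (by' : Fin q), (bz : Fin q),
      ?_, ?_, ?_, ?_, ?_, ?_,
      (mem_A1 C _ _).2 m1, (mem_A1 C _ _).2 m2, (mem_A1 C _ _).2 m3, (mem_A1 C _ _).2 m4,
      (mem_A1 C _ _).2 m5, (mem_A1 C _ _).2 m6⟩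
    · intro h; exact hij (by rw [← e1, ← e5, Subtype.ext h])
    · intro h; exact hik (by rw [← e1, ← e9, Subtype.ext h])
    · intro h; exact hjk (by rw [← e5, ← e9, Subtype.ext h])
    · intro h; exact hxy (by rw [← e2, ← e4, Subtype.ext h])
    · intro h; exact hxz (by rw [← e2, ← e8, Subtype.ext h])
    · intro h; exact hyz (by rw [← e4, ← e8, Subtype.ext h])
  rcases mippc_core R hne h4 h6 with ⟨j, i, hij, huniq⟩ | ⟨i, j, hij, huniq⟩
  · -- forced column: the unique candidate in column j lies in every admissible subcode
    obtain ⟨a, b, hfa, hgb, hab⟩ := (hR _ _).1 hij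
    refine ⟨((a : Fin q), (b : Fin q)), ?_⟩
    intro C' hC'C hC'ne hC'card hC'S
    obtain ⟨hfst, hsnd⟩ := hproj C' hC'ne hC'S
    have hbV : (b : Fin q) ∈ C'.image Prod.snd := by rw [hsnd]; exact b.2
    obtain ⟨c', hc'mem, hc'2⟩ := Finset.mem_image.1 hbV
    have hc'C : c' ∈ C := hC'C hc'mem
    have hc'1U : c'.1 ∈ U := by rw [← hfst]; exact Finset.mem_image_of_mem _ hc'mem
    have hRc' : R (f ⟨c'.1, hc'1U⟩) j = true := by
      refine (hR _ _).2 ⟨⟨c'.1, hc'1U⟩, b, rfl, hgb, ?_⟩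
      show (c'.1, (b : Fin q)) ∈ C
      rw [← hc'2]
      exact hc'C
    have := huniq _ hRc'
    rw [← hfa] at this
    have ha : (⟨c'.1, hc'1U⟩ : {x // x ∈ U}) = a := f.injective this
    have h1 : c'.1 = (a : Fin q) := by rw [← ha]
    have : c' = ((a : Fin q), (b : Fin q)) := Prod.ext h1 hc'2
    rwa [← this]
  · -- forced row: symmetric
    obtain ⟨a, b, hfa, hgb, hab⟩ := (hR _ _).1 hij
    refine ⟨((a : Fin q), (b : Fin q)), ?_⟩
    intro C' hC'C hC'ne hC'card hC'S
    obtain ⟨hfst, hsnd⟩ := hproj C' hC'ne hC'S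
    have haU : (a : Fin q) ∈ C'.image Prod.fst := by rw [hfst]; exact a.2
    obtain ⟨c', hc'mem, hc'1⟩ := Finset.mem_image.1 haU
    have hc'C : c' ∈ C := hC'C hc'mem
    have hc'2V : c'.2 ∈ V := by rw [← hsnd]; exact Finset.mem_image_of_mem _ hc'mem
    have hRc' : R i (g ⟨c'.2, hc'2V⟩) = true := by
      refine (hR _ _).2 ⟨a, ⟨c'.2, hc'2V⟩, hfa, rfl, ?_⟩
      show ((a : Fin q), c'.2) ∈ C
      rw [← hc'1]
      exact hc'C
    have := huniq _ hRc'
    rw [← hgb] at this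
    have hb : (⟨c'.2, hc'2V⟩ : {x // x ∈ V}) = b := g.injective this
    have h2 : c'.2 = (b : Fin q) := by rw [← hb]
    have : c' = ((a : Fin q), (b : Fin q)) := Prod.ext hc'1 h2
    rwa [← this]

theorem mippc_forward {q : ℕ} (C : Finset (Fin q × Fin q)) (hM : isMIPPC2 3 C) :
    IsGenPacking (A1 C) ∧ IsTriangleFree (A1 C) := by
  classical
  constructor
  · intro i j hij x y hxy ⟨h1, h2, h3, h4⟩
    rw [mem_A1] at h1 h2 h3 h4
    set C1 : Finset (Fin q × Fin q) := {(i, x), (j, y)} with hC1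
    set C2 : Finset (Fin q × Fin q) := {(i, y), (j, x)} with hC2
    have hd : desc2 C1 = desc2 C2 := by
      apply desc2_eq_of_images <;>
      · ext t
        simp [hC1, hC2, Finset.image_insert, Finset.mem_insert,
          or_comm, or_left_comm, or_assoc]
    have hsub1 : C1 ⊆ C := by
      intro c hc
      simp only [hC1, Finset.mem_insert, Finset.mem_singleton] at hc
      rcases hc with rfl | rfl <;> assumption
    have hsub2 : C2 ⊆ C := by
      intro c hc
      simp only [hC2, Finset.mem_insert, Finset.mem_singleton] at hc
      rcases hc with rfl | rfl <;> assumption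
    have hcard1 : C1.card ≤ 3 := le_trans (Finset.card_insert_le _ _) (by simp)
    have hcard2 : C2.card ≤ 3 := le_trans (Finset.card_insert_le _ _) (by simp)
    have hne1 : C1.Nonempty := ⟨(i, x), by simp [hC1]⟩
    have hne2 : C2.Nonempty := ⟨(i, y), by simp [hC2]⟩
    obtain ⟨c, hc⟩ := hM (desc2 C1) ⟨C1, hsub1, hne1, hcard1, rfl⟩
    have m1 := hc C1 hsub1 hne1 hcard1 rfl
    have m2 := hc C2 hsub2 hne2 hcard2 hd.symm
    simp only [hC1, hC2, Finset.mem_insert, Finset.mem_singleton] at m1 m2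
    rcases m1 with rfl | rfl <;>
      simp [Prod.ext_iff, hij, hxy, hij.symm, hxy.symm] at m2
  · rintro ⟨i, j, k, x, y, z, hij, hik, hjk, hxy, hxz, hyz,
      h1, h2, h3, h4, h5, h6⟩
    rw [mem_A1] at h1 h2 h3 h4 h5 h6
    set C1 : Finset (Fin q × Fin q) := {(i, x), (j, y), (k, z)} with hC1
    set C2 : Finset (Fin q × Fin q) := {(i, y), (j, z), (k, x)} with hC2
    have hd : desc2 C1 = desc2 C2 := by
      apply desc2_eq_of_images <;>
      · ext t
        simp [hC1, hC2, Finset.image_insert, Finset.mem_insert,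
          or_comm, or_left_comm, or_assoc]
    have hsub1 : C1 ⊆ C := by
      intro c hc
      simp only [hC1, Finset.mem_insert, Finset.mem_singleton] at hc
      rcases hc with rfl | rfl | rfl <;> assumption
    have hsub2 : C2 ⊆ C := by
      intro c hc
      simp only [hC2, Finset.mem_insert, Finset.mem_singleton] at hc
      rcases hc with rfl | rfl | rfl <;> assumption
    have hcard1 : C1.card ≤ 3 := le_trans (Finset.card_insert_le _ _)
      (by exact Nat.succ_le_succ (le_trans (Finset.card_insert_le _ _) (by simp)))
    have hcard2 : C2.card ≤ 3 := le_trans (Finset.card_insert_le _ _)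
      (by exact Nat.succ_le_succ (le_trans (Finset.card_insert_le _ _) (by simp)))
    have hne1 : C1.Nonempty := ⟨(i, x), by simp [hC1]⟩
    have hne2 : C2.Nonempty := ⟨(i, y), by simp [hC2]⟩
    obtain ⟨c, hc⟩ := hM (desc2 C1) ⟨C1, hsub1, hne1, hcard1, rfl⟩
    have m1 := hc C1 hsub1 hne1 hcard1 rfl
    have m2 := hc C2 hsub2 hne2 hcard2 hd.symm
    simp only [hC1, hC2, Finset.mem_insert, Finset.mem_singleton] at m1 m2
    rcases m1 with rfl | rfl | rfl <;>
      simp [Prod.ext_iff, hij, hik, hjk, hxy, hxz, hyz,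
        hij.symm, hik.symm, hjk.symm, hxy.symm, hxz.symm, hyz.symm] at m2
  
/-- A `(2,M,q)` code is a 3-MIPPC(2,M,q) iff the family `(A¹_a)_{a ∈ Q}` is a triangle-free
generalized `(q,q,K,1)` packing; moreover `M = |A¹_0| + ⋯ + |A¹_{q−1}|`. -/
theorem mippc3_iff_triangleFree_packing {q : ℕ} (C : Finset (Fin q × Fin q)) :
    (isMIPPC2 3 C ↔ IsGenPacking (A1 C) ∧ IsTriangleFree (A1 C)) ∧
    C.card = ∑ a : Fin q, (A1 C a).card := by
  constructor
  · exact ⟨mippc_forward C, fun h => mippc_backward C h.1 h.2⟩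
  · have hA : ∀ a : Fin q, (A1 C a).card = (C.filter (fun c => c.1 = a)).card := by
      intro a
      apply Finset.card_image_of_injOn
      intro u hu v hv huv
      simp only [Finset.mem_coe, Finset.mem_filter] at hu hv
      exact Prod.ext (hu.2.trans hv.2.symm) huv
    rw [Finset.card_eq_sum_card_fiberwise (f := Prod.fst) (t := Finset.univ)
      (fun x _ => Finset.mem_univ x.1)]
    exact Finset.sum_congr rfl (fun a _ => (hA a).symm)
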